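/- Let a be a real number, let m ≥ 1 be an integer with m < a + 1, and let s₁ ≥ s₂ ≥ ⋯ ≥ s_m ≥ 0 be real numbers. Then the iterated integral ∫_{s₁}^{∞} dt₁ ∫_{s₂}^{s₁} dt₂ ⋯ ∫_{s_m}^{s_{m−1}} dt_m ∏_{k=1}^{m} t_k (1 + t_k²)^{−a−1} · ∏_{1≤j<k≤m} (t_j² − t_k²) equals ( ∏_{k=1}^{m} 1/(2a+2−2k) ) · ∏_{k=1}^{m} (1 + s_k²)^{−a} · ∏_{1≤j<k≤m} (s_j² − s_k²). -/

import Mathlib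

open MeasureTheory Set Real Finset Filter

noncomputable def gfun (a : ℝ) (c : ℕ) (t : ℝ) : ℝ := t ^ (2*c+1) * (1+t^2) ^ (-a-1)
noncomputable def ufac (a : ℝ) (i k : ℕ) : ℝ := ∏ j ∈ Finset.Icc (i+1) k, (j:ℝ)/(a-j)
noncomputable def Hfun (a : ℝ) (k : ℕ) (v : ℝ) : ℝ :=
  ∑ i ∈ Finset.range (k+1), ufac a i k * (v^(2*i) * (1+v^2)^(-a) / (2*(a-i)))

lemma Hfun_succ (a : ℝ) (k : ℕ) (v : ℝ) :
    Hfun a (k+1) v = v^(2*(k+1)) * (1+v^2)^(-a) / (2*(a-(k+1)))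
      + ((k+1:ℝ)/(a-(k+1))) * Hfun a k v := by
  unfold Hfun
  rw [Finset.sum_range_succ]
  have h1 : ufac a (k+1) (k+1) = 1 := by
    unfold ufac; rw [Finset.Icc_eq_empty (by omega)]; simp
  have h2 : ∀ i, i ∈ Finset.range (k+1) → ufac a i (k+1) *
      (v^(2*i) * (1+v^2)^(-a) / (2*(a-i)))
      = ((k+1:ℝ)/(a-(k+1))) * (ufac a i k * (v^(2*i) * (1+v^2)^(-a) / (2*(a-i)))) := by
    intro i hi
    have : ufac a i (k+1) = ufac a i k * ((k+1:ℝ)/(a-(k+1))) := by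
      unfold ufac
      rw [Finset.prod_Icc_succ_top (by simp at hi; omega)]
      push_cast; ring
    rw [this]; ring
  rw [Finset.sum_congr rfl h2, ← Finset.mul_sum, h1]
  push_cast; ring

lemma rpow_split (a : ℝ) (v : ℝ) : (1+v^2)^(-a) = (1+v^2) * (1+v^2)^(-a-1) := by
  have hpos : (0:ℝ) < 1 + v^2 := by positivity
  rw [show -a-1 = -a + (-1) by ring, rpow_add hpos, rpow_neg_one]
  field_simp

lemma hasDerivAt_base (a : ℝ) (v : ℝ) :
    HasDerivAt (fun v : ℝ => (1+v^2)^(-a)) ((2*v) * (-a) * (1+v^2)^(-a-1)) v := by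
  have hpos : (0:ℝ) < 1 + v^2 := by positivity
  have h1 : HasDerivAt (fun v : ℝ => 1+v^2) (2*v) v := by
    simpa using ((hasDerivAt_pow 2 v).const_add 1)
  exact h1.rpow_const (p := -a) (Or.inl hpos.ne')

lemma hasDerivAt_neg_Hfun (a : ℝ) (k : ℕ) (ha : (k:ℝ) < a) (ha0 : 0 < a) (v : ℝ) :
    HasDerivAt (fun v => -Hfun a k v) (gfun a k v) v := by
  induction k with
  | zero =>
      have h0 : ∀ w : ℝ, Hfun a 0 w = (1+w^2)^(-a) / (2*a) := by
        intro w; unfold Hfun ufac; simp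
      simp_rw [h0]
      have h := ((hasDerivAt_base a v).div_const (2*a)).neg
      refine h.congr_deriv ?_
      unfold gfun
      field_simp
      ring
  | succ k ih =>
      have hk : (k:ℝ) < a := by push_cast at ha ⊢; linarith
      have hk1 : (k:ℝ) + 1 < a := by push_cast at ha; linarith
      have hne : a - ((k:ℝ)+1) ≠ 0 := by intro h; linarith
      have ih' := ih hk
      have heq : (fun v => -Hfun a (k+1) v) = fun v : ℝ =>
          -(v^(2*(k+1)) * (1+v^2)^(-a) / (2*(a-((k:ℝ)+1))))
          + -(((k:ℝ)+1)/(a-((k:ℝ)+1)) * Hfun a k v) := by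
        funext w
        rw [Hfun_succ]
        push_cast
        ring
      rw [heq]
      have hP : HasDerivAt (fun v : ℝ => -(v^(2*(k+1)) * (1+v^2)^(-a) / (2*(a-((k:ℝ)+1)))))
          (-(((2*(k+1):ℕ) * v^(2*(k+1)-1) * (1+v^2)^(-a)
             + v^(2*(k+1)) * ((2*v) * (-a) * (1+v^2)^(-a-1))) / (2*(a-((k:ℝ)+1))))) v :=
        (((hasDerivAt_pow (2*(k+1)) v).mul (hasDerivAt_base a v)).div_const
          (2*(a-((k:ℝ)+1)))).neg
      have hQ : HasDerivAt (fun v : ℝ => -(((k:ℝ)+1)/(a-((k:ℝ)+1)) * Hfun a k v))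
          (((k:ℝ)+1)/(a-((k:ℝ)+1)) * gfun a k v) v := by
        have h2 := (ih'.const_mul (((k:ℝ)+1)/(a-((k:ℝ)+1))))
        have : (fun v : ℝ => -(((k:ℝ)+1)/(a-((k:ℝ)+1)) * Hfun a k v))
            = fun v : ℝ => ((k:ℝ)+1)/(a-((k:ℝ)+1)) * -Hfun a k v := by
          funext w; ring
        rw [this]
        exact h2
      have h := hP.add hQ
      refine h.congr_deriv ?_
      unfold gfun
      rw [rpow_split a v]
      have h1 : 2*(k+1)-1 = 2*k+1 := by omega
      rw [h1]
      push_cast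
      field_simp
      ring


lemma tendsto_term (a : ℝ) (i : ℕ) (hi : (i:ℝ) < a) :
    Tendsto (fun v : ℝ => v^(2*i) * (1+v^2)^(-a)) atTop (nhds 0) := by
  have key : Tendsto (fun v : ℝ => (1+v^2)^((i:ℝ)-a)) atTop (nhds 0) := by
    have h1 : Tendsto (fun v : ℝ => 1+v^2) atTop atTop := by
      exact tendsto_atTop_add_const_left _ 1 (tendsto_pow_atTop (two_ne_zero))
    have h2 := tendsto_rpow_neg_atTop (y := a - (i:ℝ)) (by linarith)
    have := h2.comp h1
    simpa [Function.comp_def, show -(a-(i:ℝ)) = (i:ℝ)-a by ring] using this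
  apply squeeze_zero' (f := fun v : ℝ => v^(2*i) * (1+v^2)^(-a))
    (g := fun v : ℝ => (1+v^2)^((i:ℝ)-a))
  · filter_upwards [eventually_ge_atTop (0:ℝ)] with v hv
    positivity
  · filter_upwards [eventually_ge_atTop (0:ℝ)] with v hv
    have hpos : (0:ℝ) < 1 + v^2 := by positivity
    have hb : v^(2*i) ≤ (1+v^2)^((i:ℝ)) := by
      rw [rpow_natCast]
      calc v^(2*i) = (v^2)^i := by rw [pow_mul]
        _ ≤ (1+v^2)^i := by
            apply pow_le_pow_left₀ (by positivity)
            linarith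
    calc v^(2*i) * (1+v^2)^(-a) ≤ (1+v^2)^((i:ℝ)) * (1+v^2)^(-a) := by
          apply mul_le_mul_of_nonneg_right hb (rpow_nonneg hpos.le _)
      _ = (1+v^2)^((i:ℝ)-a) := by rw [← rpow_add hpos]; ring_nf
  · exact key

lemma tendsto_Hfun (a : ℝ) (k : ℕ) (hk : (k:ℝ) < a) :
    Tendsto (Hfun a k) atTop (nhds 0) := by
  unfold Hfun
  have : Tendsto (fun v : ℝ => ∑ i ∈ Finset.range (k+1),
      ufac a i k * (v^(2*i) * (1+v^2)^(-a) / (2*(a-i)))) atTop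
      (nhds (∑ i ∈ Finset.range (k+1), 0)) := by
    apply tendsto_finset_sum
    intro i hi
    have hi' : (i:ℝ) < a := by
      simp only [Finset.mem_range] at hi
      have : (i:ℝ) ≤ (k:ℝ) := by exact_mod_cast Nat.lt_succ_iff.mp hi
      linarith
    have := ((tendsto_term a i hi').div_const (2*(a-(i:ℝ)))).const_mul (ufac a i k)
    simpa [mul_div_assoc] using this
  simpa using this

lemma gfun_nonneg (a : ℝ) (c : ℕ) {t : ℝ} (ht : 0 ≤ t) : 0 ≤ gfun a c t := by
  unfold gfun
  have : (0:ℝ) < 1 + t^2 := by positivity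
  positivity

lemma gfun_continuous (a : ℝ) (c : ℕ) : Continuous (gfun a c) := by
  unfold gfun
  apply Continuous.mul (continuous_pow _)
  apply Continuous.rpow_const
  · continuity
  · intro x; left; positivity

lemma integrableOn_gfun_Ioi (a : ℝ) (c : ℕ) (hc : (c:ℝ) < a) (ha0 : 0 < a)
    {v : ℝ} (hv : 0 ≤ v) : IntegrableOn (gfun a c) (Ioi v) := by
  apply integrableOn_Ioi_deriv_of_nonneg
    ((hasDerivAt_neg_Hfun a c hc ha0 v).continuousAt.continuousWithinAt)
    (fun x hx => hasDerivAt_neg_Hfun a c hc ha0 x)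
    (fun x hx => gfun_nonneg a c (le_trans hv (le_of_lt hx)))
    (l := 0)
  simpa using (tendsto_Hfun a c hc).neg

lemma integral_gfun_Ioi (a : ℝ) (c : ℕ) (hc : (c:ℝ) < a) (ha0 : 0 < a)
    {v : ℝ} (hv : 0 ≤ v) : ∫ t in Ioi v, gfun a c t = Hfun a c v := by
  have := integral_Ioi_of_hasDerivAt_of_tendsto
    ((hasDerivAt_neg_Hfun a c hc ha0 v).continuousAt.continuousWithinAt)
    (fun x hx => hasDerivAt_neg_Hfun a c hc ha0 x)
    (integrableOn_gfun_Ioi a c hc ha0 hv)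
    (m := 0) (by simpa using (tendsto_Hfun a c hc).neg)
  simpa using this

lemma integrableOn_gfun_Ioo (a : ℝ) (c : ℕ) (v w : ℝ) :
    IntegrableOn (gfun a c) (Ioo v w) :=
  ((gfun_continuous a c).integrableOn_Icc).mono_set Ioo_subset_Icc_self

lemma integral_gfun_Ioo (a : ℝ) (c : ℕ) (hc : (c:ℝ) < a) (ha0 : 0 < a)
    {v w : ℝ} (hvw : v ≤ w) :
    ∫ t in Ioo v w, gfun a c t = Hfun a c v - Hfun a c w := by
  have h1 : ∫ t in Ioo v w, gfun a c t = ∫ t in v..w, gfun a c t := by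
    rw [intervalIntegral.integral_of_le hvw, integral_Ioc_eq_integral_Ioo]
  rw [h1]
  have h2 := intervalIntegral.integral_eq_sub_of_hasDerivAt
    (f := fun x => -Hfun a c x) (f' := gfun a c)
    (fun x hx => hasDerivAt_neg_Hfun a c hc ha0 x)
    ((gfun_continuous a c).intervalIntegrable v w)
  rw [h2]; ring

lemma sum_ite_range {M₀ : Type*} [AddCommMonoid M₀] (m k : ℕ) (hk : k < m) (G : ℕ → M₀) :
    ∑ n ∈ Finset.range m, (if n ≤ k then G n else 0) = ∑ n ∈ Finset.range (k+1), G n := by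
  have hsub : Finset.range (k+1) ⊆ Finset.range m := Finset.range_subset_range.2 (by omega)
  rw [← Finset.sum_subset hsub
    (fun n h1 h2 => by simp only [Finset.mem_range] at h1 h2; rw [if_neg (by omega)])]
  exact Finset.sum_congr rfl fun n hn => by
    simp only [Finset.mem_range] at hn; rw [if_pos (by omega)]

section matrices
variable (a : ℝ) {m : ℕ} (q : Fin m → ℝ)

noncomputable def Dmat : Matrix (Fin m) (Fin m) ℝ := Matrix.of fun j k => Hfun a k (q j)
noncomputable def Vmat : Matrix (Fin m) (Fin m) ℝ :=
  Matrix.of fun j i => (q j)^(2*(i:ℕ)) * (1+(q j)^2)^(-a) / (2*(a-(i:ℕ)))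
noncomputable def Umat : Matrix (Fin m) (Fin m) ℝ :=
  Matrix.of fun i k => if (i:ℕ) ≤ (k:ℕ) then ufac a i k else 0

lemma D_eq_VU : Dmat a q = Vmat a q * Umat a (m := m) := by
  ext j k
  rw [Matrix.mul_apply]
  simp only [Dmat, Vmat, Umat, Matrix.of_apply]
  have : ∀ i : Fin m, (q j)^(2*(i:ℕ)) * (1+(q j)^2)^(-a) / (2*(a-(i:ℕ)))
      * (if (i:ℕ) ≤ (k:ℕ) then ufac a i k else 0)
      = (fun n : ℕ => if n ≤ (k:ℕ) then
          ufac a n k * ((q j)^(2*n) * (1+(q j)^2)^(-a) / (2*(a-(n:ℕ)))) else 0) (i:ℕ) := by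
    intro i
    by_cases h : (i:ℕ) ≤ (k:ℕ) <;> simp [h] <;> ring
  rw [Finset.sum_congr rfl (fun i _ => this i),
    Fin.sum_univ_eq_sum_range (fun n : ℕ => if n ≤ (k:ℕ) then
      ufac a n k * ((q j)^(2*n) * (1+(q j)^2)^(-a) / (2*(a-(n:ℕ)))) else 0) m,
    sum_ite_range m k k.isLt]
  rfl

lemma det_U : (Umat a (m := m)).det = 1 := by
  rw [Matrix.det_of_upperTriangular]
  · refine Finset.prod_eq_one fun i _ => ?_
    simp only [Umat, Matrix.of_apply, le_refl, if_pos]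
    unfold ufac
    rw [Finset.Icc_eq_empty (by omega)]
    simp
  · intro i j hij
    simp only [Umat, Matrix.of_apply]
    rw [if_neg (by exact fun h => absurd (Fin.le_def.2 h) (not_le.2 hij))]

lemma det_D_eq : (Dmat a q).det = (∏ j, (1+(q j)^2)^(-a)) * (∏ i : Fin m, 1/(2*(a-(i:ℕ))))
    * (Matrix.vandermonde (fun j => (q j)^2)).det := by
  rw [D_eq_VU, Matrix.det_mul, det_U, mul_one]
  have hV : Vmat a q = Matrix.of fun j i =>
      (1+(q j)^2)^(-a) * (Matrix.of fun j i => (fun i : Fin m => 1/(2*(a-(i:ℕ)))) i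
        * Matrix.vandermonde (fun j => (q j)^2) j i) j i := by
    ext j i
    simp only [Vmat, Matrix.of_apply, Matrix.vandermonde_apply]
    rw [pow_mul]
    ring
  rw [hV]
  rw [Matrix.det_mul_column (fun j => (1+(q j)^2)^(-a))]
  rw [Matrix.det_mul_row (fun i : Fin m => 1/(2*(a-(i:ℕ))))]
  ring
end matrices

noncomputable def Lmat (m : ℕ) : Matrix (Fin m) (Fin m) ℝ :=
  Matrix.of fun j i => if (i:ℕ) = (j:ℕ) then 1 else if (i:ℕ)+1 = (j:ℕ) then -1 else 0

lemma det_L (m : ℕ) : (Lmat m).det = 1 := by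
  rw [← Matrix.det_transpose, Matrix.det_of_upperTriangular]
  · refine Finset.prod_eq_one fun i _ => ?_
    simp [Lmat, Matrix.transpose_apply]
  · intro p r hpr
    have hlt : (r:ℕ) < (p:ℕ) := hpr
    have h1 : (p:ℕ) ≠ (r:ℕ) := by omega
    have h2 : ¬ ((p:ℕ)+1 = (r:ℕ)) := by omega
    simp only [Lmat, Matrix.transpose_apply, Matrix.of_apply]
    rw [if_neg h1, if_neg h2]

lemma Lmul_apply {m : ℕ} (D : Matrix (Fin m) (Fin m) ℝ) (j k : Fin m) :
    (Lmat m * D) j k = D j k +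
      (if h : (j:ℕ) = 0 then 0 else -(D ⟨(j:ℕ)-1, by omega⟩ k)) := by
  rw [Matrix.mul_apply]
  have hterm : ∀ i : Fin m, Lmat m j i * D i k
      = (if i = j then D i k else 0) + (if (i:ℕ)+1 = (j:ℕ) then -(D i k) else 0) := by
    intro i
    simp only [Lmat, Matrix.of_apply]
    rcases eq_or_ne i j with rfl | hij
    · rw [if_pos rfl, if_pos rfl, if_neg (by omega), one_mul, add_zero]
    · rw [if_neg (fun h => hij (Fin.ext h)), if_neg hij, zero_add]
      by_cases h2 : (i:ℕ)+1 = (j:ℕ)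
      · rw [if_pos h2, if_pos h2]; ring
      · rw [if_neg h2, if_neg h2, zero_mul]
  rw [Finset.sum_congr rfl fun i _ => hterm i, Finset.sum_add_distrib]
  congr 1
  · rw [Finset.sum_ite_eq' Finset.univ j (fun i => D i k)]
    simp
  · by_cases hj : (j:ℕ) = 0
    · rw [dif_pos hj]
      exact Finset.sum_eq_zero fun i _ => if_neg (by omega)
    · rw [dif_neg hj]
      have hmem : (⟨(j:ℕ)-1, by omega⟩ : Fin m) ∈ Finset.univ := Finset.mem_univ _
      rw [Finset.sum_eq_single_of_mem (⟨(j:ℕ)-1, by omega⟩ : Fin m) hmem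
        (fun i _ hne => if_neg (fun h => hne (Fin.ext (by simp only []; omega))))]
      rw [if_pos (by simp only []; omega)]

lemma prod_indicator_pi {m : ℕ} (I : Fin m → Set ℝ) (h : Fin m → ℝ → ℝ) :
    (Set.univ.pi I).indicator (fun t : Fin m → ℝ => ∏ j, h j (t j))
      = fun t => ∏ j, (I j).indicator (h j) (t j) := by
  funext t
  by_cases ht : t ∈ Set.univ.pi I
  · rw [Set.indicator_of_mem ht]
    exact Finset.prod_congr rfl fun j _ =>
      (Set.indicator_of_mem (ht j (Set.mem_univ j)) _).symm
  · rw [Set.indicator_of_notMem ht]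
    rw [Set.mem_pi] at ht
    push_neg at ht
    obtain ⟨j, _, hj⟩ := ht
    exact (Finset.prod_eq_zero (Finset.mem_univ j)
      (by rw [Set.indicator_of_notMem hj])).symm

lemma key_prod_integral {m : ℕ} (I : Fin m → Set ℝ) (hI : ∀ j, MeasurableSet (I j))
    (h : Fin m → ℝ → ℝ) (hint : ∀ j, IntegrableOn (h j) (I j)) :
    IntegrableOn (fun t : Fin m → ℝ => ∏ j, h j (t j)) (Set.univ.pi I) ∧
      ∫ t in Set.univ.pi I, ∏ j, h j (t j) = ∏ j, ∫ x in I j, h j x := by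
  have hpiM : MeasurableSet (Set.univ.pi I) := MeasurableSet.univ_pi hI
  have hprod : Integrable (fun t : Fin m → ℝ => ∏ j, (I j).indicator (h j) (t j)) :=
    Integrable.fintype_prod fun j => (integrable_indicator_iff (hI j)).2 (hint j)
  constructor
  · refine (integrable_indicator_iff hpiM).1 ?_
    rw [prod_indicator_pi]
    exact hprod
  · rw [← integral_indicator hpiM, prod_indicator_pi,
      MeasureTheory.integral_fintype_prod_volume_eq_prod (f := fun j => (I j).indicator (h j))]
    exact Finset.prod_congr rfl fun j _ => integral_indicator (hI j)

lemma andreef {m : ℕ} (I : Fin m → Set ℝ) (hI : ∀ j, MeasurableSet (I j))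
    (f : Fin m → ℝ → ℝ) (hint : ∀ c j, IntegrableOn (f c) (I j)) :
    ∫ t in Set.univ.pi I, Matrix.det (Matrix.of fun j k : Fin m => f k (t j))
      = Matrix.det (Matrix.of fun j k : Fin m => ∫ x in I j, f k x) := by
  have step1 : ∀ (σ : Equiv.Perm (Fin m)) (t : Fin m → ℝ),
      (∏ i, f i (t (σ i))) = ∏ j, f (σ⁻¹ j) (t j) := by
    intro σ t
    rw [← Equiv.prod_comp σ (fun j => f (σ⁻¹ j) (t j))]
    simp
  calc ∫ t in Set.univ.pi I, Matrix.det (Matrix.of fun j k : Fin m => f k (t j))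
      = ∫ t in Set.univ.pi I, ∑ σ : Equiv.Perm (Fin m),
          ((Equiv.Perm.sign σ : ℤ) : ℝ) * ∏ j, f (σ⁻¹ j) (t j) := by
        congr 1
        funext t
        rw [Matrix.det_apply']
        refine Finset.sum_congr rfl fun σ _ => ?_
        rw [← step1 σ t]
        simp [Matrix.of_apply]
    _ = ∑ σ : Equiv.Perm (Fin m),
          ((Equiv.Perm.sign σ : ℤ) : ℝ) * ∏ j, ∫ x in I j, f (σ⁻¹ j) x := by
        rw [integral_finset_sum]
        · exact Finset.sum_congr rfl fun σ _ => by
            rw [integral_const_mul,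
              (key_prod_integral I hI (fun j => f (σ⁻¹ j)) (fun j => hint _ j)).2]
        · exact fun σ _ =>
            ((key_prod_integral I hI (fun j => f (σ⁻¹ j)) (fun j => hint _ j)).1).const_mul _
    _ = ∑ σ : Equiv.Perm (Fin m),
          ((Equiv.Perm.sign σ : ℤ) : ℝ) * ∏ j, (Matrix.of fun j k : Fin m => ∫ x in I j, f k x) j (σ j) := by
        apply Fintype.sum_bijective (fun σ : Equiv.Perm (Fin m) => σ⁻¹)
          (Function.bijective_iff_has_inverse.2 ⟨fun σ => σ⁻¹, fun σ => by simp, fun σ => by simp⟩)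
        intro σ
        simp [Equiv.Perm.sign_inv]
    _ = Matrix.det (Matrix.of fun j k : Fin m => ∫ x in I j, f k x) := by
        rw [← Matrix.det_transpose, Matrix.det_apply']
        exact (Finset.sum_congr rfl fun σ _ => by simp [Matrix.transpose]).symm

lemma pair_swap {m : ℕ} (f : Fin m → Fin m → ℝ) :
    ∏ i : Fin m, ∏ j ∈ Finset.Ioi i, f i j = ∏ k : Fin m, ∏ j ∈ Finset.Iio k, f j k := by
  exact Finset.prod_comm' (fun x y => by
    simp only [Finset.mem_univ, Finset.mem_Ioi, Finset.mem_Iio, true_and, and_true])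

lemma vdm_eq {m : ℕ} (x : Fin m → ℝ) :
    ∏ k : Fin m, ∏ j ∈ Finset.Iio k, (x j - x k)
      = (∏ k : Fin m, ∏ j ∈ Finset.Iio k, (-1:ℝ)) * (Matrix.vandermonde x).det := by
  rw [Matrix.det_vandermonde, pair_swap (fun i j => x j - x i), ← Finset.prod_mul_distrib]
  refine Finset.prod_congr rfl fun k _ => ?_
  rw [← Finset.prod_mul_distrib]
  exact Finset.prod_congr rfl fun j _ => by ring

lemma eps_sq {m : ℕ} : (∏ k : Fin m, ∏ j ∈ Finset.Iio k, (-1:ℝ))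
    * (∏ k : Fin m, ∏ j ∈ Finset.Iio k, (-1:ℝ)) = 1 := by
  rw [← Finset.prod_mul_distrib]
  refine Finset.prod_eq_one fun k _ => ?_
  rw [← Finset.prod_mul_distrib]
  exact Finset.prod_eq_one fun j _ => by ring

lemma prod_Icc_one (m : ℕ) (f : ℕ → ℝ) :
    ∏ k ∈ Finset.Icc 1 m, f k = ∏ k ∈ Finset.range m, f (k+1) := by
  refine (Finset.prod_nbij' (fun k => k - 1) (fun k => k + 1) ?_ ?_ ?_ ?_ ?_).symm.symm
  · intro a ha; simp only [Finset.mem_Icc] at ha; simp only [Finset.mem_range]; omega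
  · intro a ha; simp only [Finset.mem_range] at ha; simp only [Finset.mem_Icc]; omega
  · intro a ha; simp only [Finset.mem_Icc] at ha; omega
  · intro a ha; simp only [Finset.mem_range] at ha; omega
  · intro a ha; simp only [Finset.mem_Icc] at ha; congr 1; omega

lemma prod_Iio_fin {m : ℕ} (k : Fin m) (f : ℕ → ℝ) :
    ∏ j ∈ Finset.Iio k, f (j:ℕ) = ∏ j ∈ Finset.range (k:ℕ), f j := by
  rw [← Nat.Iio_eq_range, ← Fin.map_valEmbedding_Iio, Finset.prod_map]
  rfl


open MeasureTheory

theorem cauchy_even_integrate_odd (a : ℝ) (m : ℕ) (hm : 1 ≤ m) (hma : (m : ℝ) < a + 1)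
    (s : ℕ → ℝ) (hdec : ∀ i, 1 ≤ i → i < m → s (i + 1) ≤ s i) (hsm : 0 ≤ s m) :
    (∫ t in {t : Fin m → ℝ | ∀ i : Fin m,
        s ((i : ℕ) + 1) < t i ∧ (0 < (i : ℕ) → t i < s (i : ℕ))},
      (∏ k : Fin m, t k * (1 + (t k) ^ 2) ^ (-a - 1)) *
        ∏ k : Fin m, ∏ j ∈ Finset.Iio k, ((t j) ^ 2 - (t k) ^ 2)) =
    (∏ k ∈ Finset.Icc 1 m, (1 : ℝ) / (2 * a + 2 - 2 * k)) *
      (∏ k ∈ Finset.Icc 1 m, (1 + (s k) ^ 2) ^ (-a)) *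
      ∏ k ∈ Finset.Icc 1 m, ∏ j ∈ Finset.Ico 1 k, ((s j) ^ 2 - (s k) ^ 2) := by
  classical
  have ha0 : 0 < a := by
    have h1 : (1:ℝ) ≤ (m:ℝ) := by exact_mod_cast hm
    linarith
  have hca : ∀ c : Fin m, ((c:ℕ):ℝ) < a := by
    intro c
    have h1 : ((c:ℕ):ℝ) + 1 ≤ (m:ℝ) := by exact_mod_cast Nat.succ_le_of_lt c.isLt
    linarith
  have hmono : ∀ i, 1 ≤ i → ∀ j, i ≤ j → j ≤ m → s j ≤ s i := by
    intro i hi j hij hjm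
    induction j, hij using Nat.le_induction with
    | base => exact le_rfl
    | succ j hij ih => exact le_trans (hdec j (by omega) (by omega)) (ih (by omega))
  have hs0 : ∀ i, 1 ≤ i → i ≤ m → 0 ≤ s i := fun i hi him =>
    le_trans hsm (hmono i hi m him le_rfl)
  set q : Fin m → ℝ := fun j => s ((j:ℕ)+1) with hq
  set ε : ℝ := ∏ k : Fin m, ∏ j ∈ Finset.Iio k, (-1:ℝ) with hepsdef
  set I : Fin m → Set ℝ := fun i =>
    if (i:ℕ) = 0 then Set.Ioi (s 1) else Set.Ioo (s ((i:ℕ)+1)) (s (i:ℕ)) with hI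
  have hImeas : ∀ j, MeasurableSet (I j) := by
    intro j
    by_cases h : (j:ℕ) = 0 <;> simp [hI, h]
  have hIint : ∀ c j : Fin m, IntegrableOn (gfun a (c:ℕ)) (I j) := by
    intro c j
    by_cases h : (j:ℕ) = 0
    · simpa [hI, h] using integrableOn_gfun_Ioi a (c:ℕ) (hca c) ha0 (hs0 1 le_rfl hm)
    · simpa [hI, h] using integrableOn_gfun_Ioo a (c:ℕ)
        (s ((j:ℕ)+1)) (s (j:ℕ))
  have hSet : {t : Fin m → ℝ | ∀ i : Fin m,
      s ((i:ℕ)+1) < t i ∧ (0 < (i:ℕ) → t i < s (i:ℕ))} = Set.univ.pi I := by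
    ext t
    simp only [Set.mem_setOf_eq, Set.mem_pi, Set.mem_univ, true_implies]
    refine forall_congr' fun i => ?_
    by_cases h : (i:ℕ) = 0
    · simp [hI, h, Set.mem_Ioi]
    · simp [hI, h, Set.mem_Ioo, Nat.pos_of_ne_zero h]
  have hIntegrand : ∀ t : Fin m → ℝ,
      (∏ k : Fin m, t k * (1 + (t k) ^ 2) ^ (-a - 1)) *
        (∏ k : Fin m, ∏ j ∈ Finset.Iio k, ((t j) ^ 2 - (t k) ^ 2))
      = ε * Matrix.det (Matrix.of fun j k : Fin m => gfun a (k:ℕ) (t j)) := by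
    intro t
    have hA : ∏ k : Fin m, ∏ j ∈ Finset.Iio k, ((t j) ^ 2 - (t k) ^ 2)
        = ε * (Matrix.vandermonde fun i => (t i)^2).det := vdm_eq _
    have hB : Matrix.det (Matrix.of fun j k : Fin m => gfun a (k:ℕ) (t j))
        = (∏ j : Fin m, t j * (1 + (t j)^2) ^ (-a-1))
          * (Matrix.vandermonde fun i => (t i)^2).det := by
      have h1 : (Matrix.of fun j k : Fin m => gfun a (k:ℕ) (t j))
          = Matrix.of fun j k : Fin m =>
              (fun j => t j * (1 + (t j)^2) ^ (-a-1)) j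
              * (Matrix.vandermonde fun i => (t i)^2) j k := by
        ext j k
        simp only [Matrix.of_apply, Matrix.vandermonde_apply, gfun]
        rw [pow_succ, pow_mul]
        ring
      rw [h1, Matrix.det_mul_column]
    rw [hA, hB]
    ring
  rw [hSet]
  have hstep1 : (∫ t in Set.univ.pi I,
      (∏ k : Fin m, t k * (1 + (t k) ^ 2) ^ (-a - 1)) *
        ∏ k : Fin m, ∏ j ∈ Finset.Iio k, ((t j) ^ 2 - (t k) ^ 2))
      = ε * Matrix.det (Matrix.of fun j k : Fin m => ∫ x in I j, gfun a (k:ℕ) x) := by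
    simp only [hIntegrand]
    rw [MeasureTheory.integral_const_mul]
    rw [andreef I hImeas (fun c => gfun a (c:ℕ)) (fun c j => hIint c j)]
  rw [hstep1]
  have hLD : (Matrix.of fun j k : Fin m => ∫ x in I j, gfun a (k:ℕ) x)
      = Lmat m * Dmat a q := by
    ext j k
    rw [Matrix.of_apply, Lmul_apply]
    by_cases hj : (j:ℕ) = 0
    · rw [dif_pos hj]
      have hIj : I j = Set.Ioi (s 1) := by simp [hI, hj]
      simp only [Dmat, Matrix.of_apply]
      rw [hIj, integral_gfun_Ioi a (k:ℕ) (hca k) ha0 (hs0 1 le_rfl hm), add_zero]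
      have : q j = s 1 := by simp [hq, hj]
      rw [this]
    · rw [dif_neg hj]
      have hIj : I j = Set.Ioo (s ((j:ℕ)+1)) (s (j:ℕ)) := by simp [hI, hj]
      simp only [Dmat, Matrix.of_apply]
      rw [hIj, integral_gfun_Ioo a (k:ℕ) (hca k) ha0 (hdec (j:ℕ) (by omega) j.isLt)]
      have h1 : q j = s ((j:ℕ)+1) := rfl
      have h2 : q ⟨(j:ℕ)-1, by omega⟩ = s (j:ℕ) := by
        simp only [hq]
        congr 1
        omega
      rw [h1, h2]
      ring
  rw [hLD, Matrix.det_mul, det_L, one_mul, det_D_eq a q]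
  have hdet : (Matrix.vandermonde fun j => (q j)^2).det
      = ε * ∏ k : Fin m, ∏ j ∈ Finset.Iio k, ((q j)^2 - (q k)^2) := by
    rw [vdm_eq (fun j => (q j)^2), ← hepsdef, ← mul_assoc, eps_sq, one_mul]
  rw [hdet]
  -- RHS conversions
  have hc : ∏ k ∈ Finset.Icc 1 m, (1:ℝ)/(2*a+2-2*(k:ℕ))
      = ∏ i : Fin m, 1/(2*(a-(i:ℕ))) := by
    rw [prod_Icc_one m (fun k => (1:ℝ)/(2*a+2-2*(k:ℕ))),
      ← Fin.prod_univ_eq_prod_range (fun n => (1:ℝ)/(2*a+2-2*((n+1:ℕ):ℝ))) m]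
    refine Finset.prod_congr rfl fun i _ => ?_
    congr 1
    push_cast
    ring
  have hr : ∏ k ∈ Finset.Icc 1 m, (1 + (s k)^2) ^ (-a)
      = ∏ j : Fin m, (1 + (q j)^2) ^ (-a) := by
    rw [prod_Icc_one m (fun k => (1 + (s k)^2) ^ (-a)),
      ← Fin.prod_univ_eq_prod_range (fun n => (1 + (s (n+1))^2) ^ (-a)) m]
  have hv : ∏ k ∈ Finset.Icc 1 m, ∏ j ∈ Finset.Ico 1 k, ((s j)^2 - (s k)^2)
      = ∏ k : Fin m, ∏ j ∈ Finset.Iio k, ((q j)^2 - (q k)^2) := by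
    rw [prod_Icc_one m (fun k => ∏ j ∈ Finset.Ico 1 k, ((s j)^2 - (s k)^2)),
      ← Fin.prod_univ_eq_prod_range
        (fun n => ∏ j ∈ Finset.Ico 1 (n+1), ((s j)^2 - (s (n+1))^2)) m]
    refine Finset.prod_congr rfl fun k _ => ?_
    rw [Finset.Ico_add_one_right_eq_Icc, prod_Icc_one (k:ℕ) (fun j => (s j)^2 - (s ((k:ℕ)+1))^2),
      ← prod_Iio_fin k (fun j => (s (j+1))^2 - (s ((k:ℕ)+1))^2)]
  rw [hc, hr, hv]
  rw [show ε * ((∏ j : Fin m, (1 + (q j)^2) ^ (-a)) * (∏ i : Fin m, 1/(2*(a-(i:ℕ))))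
      * (ε * ∏ k : Fin m, ∏ j ∈ Finset.Iio k, ((q j)^2 - (q k)^2)))
    = (ε * ε) * ((∏ j : Fin m, (1 + (q j)^2) ^ (-a)) * (∏ i : Fin m, 1/(2*(a-(i:ℕ))))
      * ∏ k : Fin m, ∏ j ∈ Finset.Iio k, ((q j)^2 - (q k)^2)) from by ring,
    eps_sq, one_mul]
  ring
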